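/- Let A = {00, 01, 10, 11} and let π : A^∞ → C² be the interleaving bijection π(ε₁δ₁, ε₂δ₂, ε₃δ₃, …) = (ε₁ε₂ε₃⋯, δ₁δ₂δ₃⋯). Then for every element f of the Brin–Thompson group 2V, the function f^π = π⁻¹ ∘ f ∘ π : A^∞ → A^∞ is a rational function. -/

import Mathlib

/-- The Cantor space of infinite binary sequences. -/
abbrev Cantor : Type := ℕ → Bool

/-- Concatenation of a finite binary string with an infinite binary sequence. -/
def cat (α : List Bool) (ω : Cantor) : Cantor := fun k =>
  if h : k < α.length then α.get ⟨k, h⟩ else ω (k - α.length)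

/-- The dyadic interval `I(α)`: all infinite binary sequences with prefix `α`. -/
def dyadicI (α : List Bool) : Set Cantor := Set.range (cat α)

/-- The dyadic rectangle `R(α, β) = I(α) × I(β)` in `C²`. -/
def rect (α β : List Bool) : Set (Cantor × Cantor) :=
  {p | (∃ ψ, p.1 = cat α ψ) ∧ ∃ ω, p.2 = cat β ω}

/-- A finite list of dyadic rectangles forms a dyadic subdivision of `C²`. -/
def IsSubdivision (L : List (List Bool × List Bool)) : Prop :=
  (⋃ r ∈ L, rect r.1 r.2) = Set.univ ∧
    List.Pairwise (fun r s => Disjoint (rect r.1 r.2) (rect s.1 s.2)) L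

/-- A numbered pattern pair for `2V`. -/
abbrev PatternPair : Type := List ((List Bool × List Bool) × (List Bool × List Bool))

/-- The numbered pattern pair `pp` represents the map `f`: domains and ranges each form
dyadic subdivisions, and `f` maps each domain rectangle to the corresponding range
rectangle by prefix replacement. -/
def Represents (pp : PatternPair) (f : Cantor × Cantor → Cantor × Cantor) : Prop :=
  IsSubdivision (pp.map Prod.fst) ∧ IsSubdivision (pp.map Prod.snd) ∧
    ∀ r ∈ pp, ∀ ψ ω : Cantor,
      f (cat r.1.1 ψ, cat r.1.2 ω) = (cat r.2.1 ψ, cat r.2.2 ω)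

/-- Membership in the Brin–Thompson group `2V`, viewed inside the permutation group of
`C²`: a homeomorphism acting by prefix replacements on the rectangles of some dyadic
subdivision. -/
def MemTwoV (f : Equiv.Perm (Cantor × Cantor)) : Prop :=
  Continuous ⇑f ∧ Continuous ⇑f.symm ∧ ∃ pp : PatternPair, Represents pp ⇑f


/-- An asynchronous transducer over the alphabet `A`: a finite set of states `S`, an
initial state, and a transition function giving, for each state and input letter, the
new state and the finite output word. -/
structure Transducer (A : Type) where
  /-- The set of states. -/
  S : Type
  /-- The set of states is finite. -/
  fin : Finite S
  /-- The initial state. -/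
  init : S
  /-- The transition function. -/
  step : S → A → S × List A

/-- The state sequence of the transducer on the infinite input string `x`. -/
def Transducer.states {A : Type} (T : Transducer A) (x : ℕ → A) : ℕ → T.S
  | 0 => T.init
  | k + 1 => (T.step (T.states x k) (x k)).1

/-- The finite output word produced at step `k` on input string `x`. -/
def Transducer.block {A : Type} (T : Transducer A) (x : ℕ → A) (k : ℕ) : List A :=
  (T.step (T.states x k) (x k)).2

/-- The concatenation of the output words produced during the first `k` steps:
a finite prefix of the output string. -/
def Transducer.outPrefix {A : Type} (T : Transducer A) (x : ℕ → A) (k : ℕ) : List A :=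
  ((List.range k).map (T.block x)).flatten

/-- The transducer is nondegenerate: every infinite input string produces an infinite
output string. -/
def Transducer.Nondegenerate {A : Type} (T : Transducer A) : Prop :=
  ∀ (x : ℕ → A) (k : ℕ), ∃ m, k ≤ (T.outPrefix x m).length

/-- `y` is the output string of the transducer on input string `x`: every finite prefix
of the produced output is a prefix of `y`. -/
def Transducer.IsOutput {A : Type} (T : Transducer A) (x y : ℕ → A) : Prop :=
  ∀ (k i : ℕ) (h : i < (T.outPrefix x k).length), y i = (T.outPrefix x k).get ⟨i, h⟩

/-- `f : A^∞ → A^∞` is a rational function: it is the input-output map of some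
nondegenerate asynchronous transducer. -/
def IsRational {A : Type} (f : (ℕ → A) → (ℕ → A)) : Prop :=
  ∃ T : Transducer A, T.Nondegenerate ∧ ∀ x, T.IsOutput x (f x)

/-- The interleaving bijection `π` from infinite strings over the four-letter alphabet
`A = {00, 01, 10, 11}` (pairs of binary digits) to `C²`:
`π(ε₁δ₁, ε₂δ₂, …) = (ε₁ε₂⋯, δ₁δ₂⋯)`. -/
def interleave : (ℕ → Bool × Bool) ≃ Cantor × Cantor where
  toFun x := (fun k => (x k).1, fun k => (x k).2)
  invFun p := fun k => (p.1 k, p.2 k)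
  left_inv _ := rfl
  right_inv _ := rfl

/- ===================== Auxiliary development ===================== -/

namespace TwoVRational

abbrev MEntry : Type := (List Bool × List Bool) × (List Bool × List Bool)

/-- `α` is a prefix of the stream `g`. -/
def SP (α : List Bool) (g : Cantor) : Prop := ∀ (i : ℕ) (h : i < α.length), α[i] = g i

lemma sp_cat {α : List Bool} {g : Cantor} (h : SP α g) :
    g = cat α (fun n => g (n + α.length)) := by
  funext n
  simp only [cat, List.get_eq_getElem]
  split
  · exact (h n ‹_›).symm
  · congr 1; omega

lemma sp_of_cat {α : List Bool} {g ψ : Cantor} (h : g = cat α ψ) : SP α g := by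
  intro i hi; subst h; simp [cat, hi]

lemma prefix_map_range {α : List Bool} {g : Cantor} {k : ℕ} :
    α <+: (List.range k).map g ↔ α.length ≤ k ∧ SP α g := by
  constructor
  · intro h
    have hlen := h.length_le
    simp only [List.length_map, List.length_range] at hlen
    refine ⟨hlen, fun i hi => ?_⟩
    have := h.getElem hi
    rwa [List.getElem_map, List.getElem_range] at this
  · rintro ⟨hlen, hsp⟩
    rw [List.prefix_iff_eq_take]
    refine List.ext_getElem (by simp; omega) ?_
    intro i h1 h2
    rw [List.getElem_take, List.getElem_map, List.getElem_range]
    exact hsp i h1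

def predM (w1 : List (Bool × Bool)) (r : MEntry) : Bool :=
  r.1.1.isPrefixOf (w1.map Prod.fst) && r.1.2.isPrefixOf (w1.map Prod.snd)

def outLetter (p : ℕ) (α γ aw : List Bool) : Bool :=
  if p < γ.length then γ.getD p false else aw.getD (p + α.length - γ.length) false

def outPairM (E : ℕ) (r : MEntry) (w : List (Bool × Bool)) : List (Bool × Bool) :=
  if w.length ≤ E then []
  else [(outLetter (w.length - 1 - E) r.1.1 r.2.1 (w.map Prod.fst),
         outLetter (w.length - 1 - E) r.1.2 r.2.2 (w.map Prod.snd))]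

def nextR (pp : PatternPair) (R : Option {r : MEntry // r ∈ pp}) (w1 : List (Bool × Bool)) :
    Option {r : MEntry // r ∈ pp} :=
  match R with
  | some r => some r
  | none => pp.attach.find? fun r => predM w1 r.val

def nextW (E : ℕ) (w1 : List (Bool × Bool)) : List (Bool × Bool) :=
  if w1.length ≤ 2*E+1 then w1 else w1.tail

lemma nextW_length_le {E : ℕ} {w1 : List (Bool × Bool)} (h : w1.length ≤ 2*E+2) :
    (nextW E w1).length ≤ 2*E+1 := by
  unfold nextW; split
  · assumption
  · simp only [List.length_tail]; omega

def mach (pp : PatternPair) (E : ℕ) : Transducer (Bool × Bool) where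
  S := Option {r : MEntry // r ∈ pp} × {w : List (Bool × Bool) // w.length ≤ 2*E+1}
  fin := by
    haveI h1 : Finite {r : MEntry // r ∈ pp} := pp.finite_toSet.to_subtype
    haveI h2 : Finite {w : List (Bool × Bool) // w.length ≤ 2*E+1} :=
      (List.finite_length_le _ _).to_subtype
    infer_instance
  init := (none, ⟨[], by simp⟩)
  step := fun s ℓ =>
    ((nextR pp s.1 (s.2.val ++ [ℓ]),
      ⟨nextW E (s.2.val ++ [ℓ]), nextW_length_le (by have := s.2.2; simp only [List.length_append, List.length_cons, List.length_nil]; omega)⟩),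
     (nextR pp s.1 (s.2.val ++ [ℓ])).elim [] fun r => outPairM E r.val (nextW E (s.2.val ++ [ℓ])))

/-- The output stream. -/
def outY (f : Cantor × Cantor → Cantor × Cantor) (x : ℕ → Bool × Bool) : ℕ → Bool × Bool :=
  fun n => ((f (fun n => (x n).1, fun n => (x n).2)).1 n,
            (f (fun n => (x n).1, fun n => (x n).2)).2 n)

/-- The machine invariant. -/
def Inv (pp : PatternPair) (E : ℕ) (x : ℕ → Bool × Bool) (k : ℕ) : Prop :=
  (((mach pp E).states x k).2).val = ((List.range k).map x).drop (k - (2*E+1)) ∧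
  (((mach pp E).states x k).1 = none → k ≤ E) ∧
  (∀ r, ((mach pp E).states x k).1 = some r →
    SP r.val.1.1 (fun n => (x n).1) ∧ SP r.val.1.2 (fun n => (x n).2))

lemma outLetter_correct (α γ : List Bool) (g : Cantor) (E k s p : ℕ)
    (hα : α.length ≤ E) (hγ : γ.length ≤ E) (hkE : E < k + 1)
    (hs : s = (k+1) - (2*E+1)) (hp : p = (k+1) - s - 1 - E) :
    outLetter p α γ (((List.range (k+1)).map g).drop s)
      = cat γ (fun n => g (n + α.length)) (k - E) := by
  have hlen : (((List.range (k+1)).map g).drop s).length = (k+1) - s := by simp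
  simp only [outLetter, cat, List.get_eq_getElem]
  by_cases hj : k - E < γ.length
  · have hpj : p = k - E := by omega
    subst hpj
    rw [if_pos hj, dif_pos hj, List.getD_eq_getElem _ _ hj]
  · have hnp : ¬ p < γ.length := by omega
    rw [if_neg hnp, dif_neg hj, List.getD_eq_getElem _ _ (by rw [hlen]; omega)]
    rw [List.getElem_drop, List.getElem_map, List.getElem_range]
    exact congrArg g (by omega)

end TwoVRational

namespace TwoVRational

lemma step_main (pp : PatternPair) (E : ℕ) (f : Cantor × Cantor → Cantor × Cantor)
    (x : ℕ → Bool × Bool)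
    (hmap : ∀ r ∈ pp, ∀ ψ ω : Cantor, f (cat r.1.1 ψ, cat r.1.2 ω) = (cat r.2.1 ψ, cat r.2.2 ω))
    (hE : ∀ r ∈ pp, r.1.1.length ≤ E ∧ r.1.2.length ≤ E ∧ r.2.1.length ≤ E ∧ r.2.2.length ≤ E)
    {r0 : MEntry} (hr0 : r0 ∈ pp)
    (h0a : SP r0.1.1 (fun n => (x n).1)) (h0b : SP r0.1.2 (fun n => (x n).2))
    {k : ℕ} (hI : Inv pp E x k) :
    Inv pp E x (k+1) ∧
      (mach pp E).block x k = if k + 1 ≤ E then [] else [outY f x (k - E)] := by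
  obtain ⟨hw, hnone, hsome⟩ := hI
  set w1 : List (Bool × Bool) := ((mach pp E).states x k).2.val ++ [x k] with hw1def
  have hR : ((mach pp E).states x (k+1)).1 = nextR pp ((mach pp E).states x k).1 w1 := rfl
  have hWn : ((mach pp E).states x (k+1)).2.val = nextW E w1 := rfl
  have hB : (mach pp E).block x k
      = (nextR pp ((mach pp E).states x k).1 w1).elim []
          (fun r => outPairM E r.val (nextW E w1)) := rfl
  have hw1 : w1 = (((List.range k).map x).drop (k - (2*E+1))) ++ [x k] := by
    rw [hw1def, hw]
  have hlenw1 : w1.length = (k - (k - (2*E+1))) + 1 := by rw [hw1]; simp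
  -- uniform new-window formula
  have hW2 : nextW E w1 = ((List.range (k+1)).map x).drop ((k+1) - (2*E+1)) := by
    unfold nextW
    by_cases hk : k + 1 ≤ 2*E+1
    · rw [if_pos (by omega)]
      rw [hw1]
      have h0 : k - (2*E+1) = 0 := by omega
      have h0' : (k+1) - (2*E+1) = 0 := by omega
      rw [h0, h0', List.drop_zero, List.drop_zero, List.range_succ, List.map_append]
      rfl
    · rw [if_neg (by omega)]
      have hne : ((List.range k).map x).drop (k - (2*E+1)) ≠ [] := by
        apply List.ne_nil_of_length_pos
        simp only [List.length_drop, List.length_map, List.length_range]; omega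
      rw [hw1, List.tail_append_of_ne_nil hne, List.tail_drop, List.range_succ,
        List.map_append, List.drop_append_of_le_length (by simp only [List.length_map, List.length_range]; omega)]
      have he : k - (2*E+1) + 1 = (k+1) - (2*E+1) := by omega
      rw [he]
      rfl
  have hlenW2 : (nextW E w1).length = (k+1) - ((k+1) - (2*E+1)) := by
    rw [hW2]; simp
  -- output correctness for an identified rectangle
  have houtput : ∀ (r : MEntry), r ∈ pp → SP r.1.1 (fun n => (x n).1) →
      SP r.1.2 (fun n => (x n).2) →
      outPairM E r (nextW E w1) = if k + 1 ≤ E then [] else [outY f x (k - E)] := by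
    intro r hr hspa hspb
    unfold outPairM
    by_cases hk1 : k + 1 ≤ E
    · rw [if_pos (by omega), if_pos hk1]
    · rw [if_neg (by omega), if_neg hk1]
      obtain ⟨hα, hβ, hγ, hδ⟩ := hE r hr
      have e1 : (fun n => (x n).1) = cat r.1.1 (fun n => (x (n + r.1.1.length)).1) :=
        sp_cat hspa
      have e2 : (fun n => (x n).2) = cat r.1.2 (fun n => (x (n + r.1.2.length)).2) :=
        sp_cat hspb
      have hfab : f ((fun n => (x n).1), (fun n => (x n).2))
          = (cat r.2.1 (fun n => (x (n + r.1.1.length)).1),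
             cat r.2.2 (fun n => (x (n + r.1.2.length)).2)) := by
        rw [e1, e2]; exact hmap r hr _ _
      have hy : outY f x (k - E)
          = (cat r.2.1 (fun n => (x (n + r.1.1.length)).1) (k - E),
             cat r.2.2 (fun n => (x (n + r.1.2.length)).2) (k - E)) := by
        unfold outY; rw [hfab]
      rw [hy]
      have hmapfst : (nextW E w1).map Prod.fst
          = ((List.range (k+1)).map (fun n => (x n).1)).drop ((k+1) - (2*E+1)) := by
        rw [hW2, List.map_drop, List.map_map]; rfl
      have hmapsnd : (nextW E w1).map Prod.snd
          = ((List.range (k+1)).map (fun n => (x n).2)).drop ((k+1) - (2*E+1)) := by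
        rw [hW2, List.map_drop, List.map_map]; rfl
      simp only [List.cons.injEq, and_true, Prod.mk.injEq]
      constructor
      · rw [hmapfst]
        exact outLetter_correct r.1.1 r.2.1 _ E k _ _ hα hγ (by omega) rfl
          (by rw [hlenW2])
      · rw [hmapsnd]
        exact outLetter_correct r.1.2 r.2.2 _ E k _ _ hβ hδ (by omega) rfl
          (by rw [hlenW2])
  cases hR0 : ((mach pp E).states x k).1 with
  | some r =>
    rw [hR0] at hR hB
    have hRs : nextR pp (some r) w1 = some r := rfl
    rw [hRs] at hR hB
    obtain ⟨hspa, hspb⟩ := hsome r hR0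
    refine ⟨⟨hWn.trans hW2, ?_, ?_⟩, ?_⟩
    · intro h; rw [hR] at h; exact (Option.some_ne_none _ h).elim
    · intro r' h; rw [hR] at h
      obtain rfl := Option.some.inj h
      exact ⟨hspa, hspb⟩
    · rw [hB]
      exact houtput r.val r.property hspa hspb
  | none =>
    rw [hR0] at hR hB
    have hkE : k ≤ E := hnone hR0
    have hw1' : w1 = (List.range (k+1)).map x := by
      rw [hw1]
      have h0 : k - (2*E+1) = 0 := by omega
      rw [h0, List.drop_zero, List.range_succ, List.map_append]
      rfl
    have hRn : nextR pp none w1 = pp.attach.find? fun r => predM w1 r.val := rfl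
    rw [hRn] at hR hB
    cases hfind : pp.attach.find? (fun r => predM w1 r.val) with
    | none =>
      rw [hfind] at hR hB
      have hk1 : k + 1 ≤ E := by
        by_contra hcon
        have hpred : predM w1 r0 = true := by
          unfold predM
          rw [Bool.and_eq_true, List.isPrefixOf_iff_prefix, List.isPrefixOf_iff_prefix]
          obtain ⟨ha0, hb0, -, -⟩ := hE r0 hr0
          constructor
          · rw [hw1', List.map_map]
            exact prefix_map_range.mpr ⟨by omega, h0a⟩
          · rw [hw1', List.map_map]
            exact prefix_map_range.mpr ⟨by omega, h0b⟩
        exact absurd hpred (List.find?_eq_none.mp hfind ⟨r0, hr0⟩ (List.mem_attach _ _))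
      refine ⟨⟨hWn.trans hW2, fun _ => hk1, ?_⟩, ?_⟩
      · intro r' h; rw [hR] at h; exact (Option.some_ne_none _ h.symm).elim
      · rw [hB, if_pos hk1]; rfl
    | some rf =>
      rw [hfind] at hR hB
      have hpred := List.find?_some hfind
      unfold predM at hpred
      rw [Bool.and_eq_true, List.isPrefixOf_iff_prefix, List.isPrefixOf_iff_prefix] at hpred
      obtain ⟨hp1, hp2⟩ := hpred
      rw [hw1', List.map_map] at hp1 hp2
      have hspa : SP rf.val.1.1 (fun n => (x n).1) := (prefix_map_range.mp hp1).2
      have hspb : SP rf.val.1.2 (fun n => (x n).2) := (prefix_map_range.mp hp2).2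
      refine ⟨⟨hWn.trans hW2, ?_, ?_⟩, ?_⟩
      · intro h; rw [hR] at h; exact (Option.some_ne_none _ h).elim
      · intro r' h; rw [hR] at h
        obtain rfl := Option.some.inj h
        exact ⟨hspa, hspb⟩
      · rw [hB]
        exact houtput rf.val rf.property hspa hspb

end TwoVRational

namespace TwoVRational

lemma le_foldr_max {l : List ℕ} {n : ℕ} (h : n ∈ l) : n ≤ l.foldr max 0 := by
  induction l with
  | nil => simp at h
  | cons a t ih =>
    rcases List.mem_cons.mp h with rfl | h'
    · exact le_max_left _ _
    · exact le_trans (ih h') (le_max_right _ _)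

end TwoVRational


open TwoVRational

/-- For every element `f` of the Brin–Thompson group `2V`, the conjugate
`f^π = π⁻¹ ∘ f ∘ π` by the interleaving bijection is a rational function on the
infinite strings over the four-letter alphabet `{00, 01, 10, 11}`. -/
theorem element_of_2V_is_rational (f : Equiv.Perm (Cantor × Cantor)) (hf : MemTwoV f) :
    IsRational (⇑interleave.symm ∘ ⇑f ∘ ⇑interleave) := by
  obtain ⟨-, -, pp, ⟨hcov, -⟩, -, hmap⟩ := hf
  set E := (pp.map fun r =>
    max (max r.1.1.length r.1.2.length) (max r.2.1.length r.2.2.length)).foldr max 0 with hEdef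
  have hE : ∀ r ∈ pp, r.1.1.length ≤ E ∧ r.1.2.length ≤ E ∧
      r.2.1.length ≤ E ∧ r.2.2.length ≤ E := by
    intro r hr
    have h := le_foldr_max (List.mem_map_of_mem
      (f := fun r : MEntry => max (max r.1.1.length r.1.2.length) (max r.2.1.length r.2.2.length)) hr)
    rw [← hEdef] at h
    simp only [max_le_iff] at h
    tauto
  have hcover : ∀ x : ℕ → Bool × Bool, ∃ r0 ∈ pp,
      SP r0.1.1 (fun n => (x n).1) ∧ SP r0.1.2 (fun n => (x n).2) := by
    intro x
    have hx : ((fun n => (x n).1, fun n => (x n).2) : Cantor × Cantor)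
        ∈ ⋃ r ∈ pp.map Prod.fst, rect r.1 r.2 := by rw [hcov]; trivial
    simp only [Set.mem_iUnion, rect, Set.mem_setOf_eq, List.mem_map] at hx
    obtain ⟨r, ⟨⟨r0, hr0, rfl⟩, ⟨ψ, hψ⟩, ⟨ω, hω⟩⟩⟩ := hx
    exact ⟨r0, hr0, sp_of_cat hψ, sp_of_cat hω⟩
  have hblock : ∀ (x : ℕ → Bool × Bool) (k : ℕ), (mach pp E).block x k =
      if k + 1 ≤ E then [] else [outY (⇑f) x (k - E)] := by
    intro x k
    obtain ⟨r0, hr0, h0a, h0b⟩ := hcover x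
    have hInv : ∀ m, Inv pp E x m := by
      intro m
      induction m with
      | zero =>
        refine ⟨by simp [mach, Transducer.states], fun _ => Nat.zero_le E, fun r h => ?_⟩
        exact (Option.some_ne_none r h.symm).elim
      | succ m ih => exact (step_main pp E (⇑f) x hmap hE hr0 h0a h0b ih).1
    exact (step_main pp E (⇑f) x hmap hE hr0 h0a h0b (hInv k)).2
  have houtPre : ∀ (x : ℕ → Bool × Bool) (k : ℕ),
      (mach pp E).outPrefix x k = (List.range (k - E)).map (outY (⇑f) x) := by
    intro x k
    induction k with
    | zero => simp [Transducer.outPrefix]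
    | succ k ih =>
      have hsplit : (mach pp E).outPrefix x (k+1)
          = (mach pp E).outPrefix x k ++ (mach pp E).block x k := by
        simp [Transducer.outPrefix, List.range_succ]
      rw [hsplit, ih, hblock]
      by_cases hk : k + 1 ≤ E
      · rw [if_pos hk]
        have h1 : k + 1 - E = k - E := by omega
        rw [h1, List.append_nil]
      · rw [if_neg hk]
        have h1 : k + 1 - E = (k - E) + 1 := by omega
        rw [h1, List.range_succ, List.map_append]
        rfl
  refine ⟨mach pp E, ?_, ?_⟩
  · intro x k
    refine ⟨k + E, ?_⟩
    rw [houtPre]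
    simp only [List.length_map, List.length_range]
    omega
  · intro x k i h
    simp only [List.get_eq_getElem]
    rw [List.getElem_of_eq (houtPre x k) h]
    simp only [List.getElem_map, List.getElem_range]
    rfl
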